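/- Let d > 1 be an integer. If d is not divisible by 3, then for every natural number n ≥ 1, d divides o_{n+d} − o_n; if d is divisible by 3, then for every natural number n ≥ 1, d divides o_{n+3d} − o_n. Hence the sequence of octahedral numbers is periodic modulo d with period dividing d if 3 ∤ d, and dividing 3d if 3 ∣ d. -/
import Mathlib


/-- Octahedral numbers: oₙ = n(2n²+1)/3. -/
def oct (n : ℕ) : ℤ := (n : ℤ) * (2 * n ^ 2 + 1) / 3

lemma three_dvd_oct_num (n : ℤ) : (3 : ℤ) ∣ n * (2 * n ^ 2 + 1) := by
  have h : ∀ a : ZMod 3, a * (2 * a ^ 2 + 1) = 0 := by decide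
  have : ((n * (2 * n ^ 2 + 1) : ℤ) : ZMod 3) = 0 := by push_cast; exact h n
  exact (ZMod.intCast_zmod_eq_zero_iff_dvd _ 3).mp this

lemma three_mul_oct (n : ℕ) : 3 * oct n = (n : ℤ) * (2 * n ^ 2 + 1) :=
  Int.mul_ediv_cancel' (three_dvd_oct_num n)

/-- For d > 1: if 3 ∤ d then d divides oₙ₊d − oₙ, and if 3 ∣ d then d divides
oₙ₊₃d − oₙ, for all n ≥ 1. -/
theorem octahedral_period (d : ℕ) (hd : 1 < d) :
    (¬ (3 ∣ d) → ∀ n : ℕ, 1 ≤ n → (d : ℤ) ∣ oct (n + d) - oct n) ∧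
    ((3 ∣ d) → ∀ n : ℕ, 1 ≤ n → (d : ℤ) ∣ oct (n + 3 * d) - oct n) := by
  constructor
  · intro h3 n _
    have key : 3 * (oct (n + d) - oct n) =
        (d : ℤ) * (6 * n ^ 2 + 6 * n * d + 2 * d ^ 2 + 1) := by
      rw [mul_sub, three_mul_oct, three_mul_oct]
      push_cast
      ring
    have hdvd : (d : ℤ) ∣ 3 * (oct (n + d) - oct n) := key ▸ Dvd.intro _ rfl
    have hcop : IsCoprime (d : ℤ) 3 := by
      rw [Int.isCoprime_iff_gcd_eq_one]
      simpa [Int.gcd] using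
        (Nat.coprime_comm.mp ((Nat.Prime.coprime_iff_not_dvd Nat.prime_three).mpr h3))
    exact hcop.dvd_of_dvd_mul_left hdvd
  · intro h3 n _
    have key : 3 * (oct (n + 3 * d) - oct n) =
        3 * ((d : ℤ) * (6 * n ^ 2 + 18 * n * d + 18 * d ^ 2 + 1)) := by
      rw [mul_sub, three_mul_oct, three_mul_oct]
      push_cast
      ring
    have h := mul_left_cancel₀ (by norm_num : (3 : ℤ) ≠ 0) key
    exact ⟨_, h⟩
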